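/- Let p : [0,X] → ℝ be nonnegative, antitone (monotone decreasing), and integrable on [0,X]. Then ∫₀^{X} p(x) · w(x) dx ≤ (p(0)/cosh(X/2) + p(X/2)) · ∫₀^{X} w(x) dx. -/

import Mathlib

lemma mono_aux {a b : ℝ} {f f' : ℝ → ℝ}
    (hf : ∀ x ∈ Set.Icc a b, HasDerivWithinAt f (f' x) (Set.Icc a b) x)
    (h0 : ∀ x ∈ Set.Icc a b, 0 ≤ f' x) : MonotoneOn f (Set.Icc a b) := by
  apply monotoneOn_of_deriv_nonneg (convex_Icc a b)
    (fun x hx => (hf x hx).continuousWithinAt)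
  · intro x hx
    rw [interior_Icc] at hx
    exact ((hf x (Set.Ioo_subset_Icc_self hx)).hasDerivAt
      (Icc_mem_nhds hx.1 hx.2)).differentiableAt.differentiableWithinAt
  · intro x hx
    rw [interior_Icc] at hx
    have h := (hf x (Set.Ioo_subset_Icc_self hx)).hasDerivAt (Icc_mem_nhds hx.1 hx.2)
    rw [h.deriv]
    exact h0 x (Set.Ioo_subset_Icc_self hx)

lemma cosh_compare
    (X : ℝ) (w w' w'' : ℝ → ℝ)
    (hw' : ∀ x ∈ Set.Icc (0:ℝ) X, HasDerivWithinAt w (w' x) (Set.Icc 0 X) x)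
    (hw'' : ∀ x ∈ Set.Icc (0:ℝ) X, HasDerivWithinAt w' (w'' x) (Set.Icc 0 X) x)
    (hwnonneg : ∀ x ∈ Set.Icc (0:ℝ) X, 0 ≤ w x)
    (hconvex : ∀ x ∈ Set.Icc (0:ℝ) X, w x ≤ w'' x)
    (hw'0 : 0 ≤ w' 0) :
    ∀ y ∈ Set.Icc (0:ℝ) X, ∀ x ∈ Set.Icc (0:ℝ) X, y ≤ x →
      w y * Real.cosh (x - y) ≤ w x := by
  intro y hy x hx hyx
  -- w' is nonnegative
  have hw'nonneg : ∀ t ∈ Set.Icc (0:ℝ) X, 0 ≤ w' t := by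
    intro t ht
    have hmono : MonotoneOn w' (Set.Icc 0 X) :=
      mono_aux hw'' (fun s hs => le_trans (hwnonneg s hs) (hconvex s hs))
    have h0X : (0:ℝ) ∈ Set.Icc (0:ℝ) X := ⟨le_refl 0, le_trans ht.1 ht.2⟩
    exact le_trans hw'0 (hmono h0X ht ht.1)
  -- F t = exp(-t) * (w' t + w t) is monotone
  have hF : MonotoneOn (fun t => Real.exp (-t) * (w' t + w t)) (Set.Icc 0 X) := by
    apply mono_aux (f' := fun t => Real.exp (-t) * (w'' t - w t))
    · intro t ht
      have he : HasDerivWithinAt (fun t => Real.exp (-t)) (-Real.exp (-t)) (Set.Icc 0 X) t := by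
        simpa [Function.comp_def] using ((Real.hasDerivAt_exp (-t)).comp t (hasDerivAt_neg t)).hasDerivWithinAt
      have := he.fun_mul ((hw'' t ht).add (hw' t ht))
      refine this.congr_deriv ?_
      simp only [Pi.add_apply]; ring
    · intro t ht
      have := sub_nonneg.mpr (hconvex t ht)
      positivity
  -- key: exp (t - y) * w y ≤ w' t + w t for t ≥ y
  have key1 : ∀ t ∈ Set.Icc (0:ℝ) X, y ≤ t → Real.exp (t - y) * w y ≤ w' t + w t := by
    intro t ht hyt
    have h1 := hF hy ht hyt
    have h2 : Real.exp (-y) * w y ≤ Real.exp (-y) * (w' y + w y) := by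
      have := hw'nonneg y hy
      nlinarith [Real.exp_pos (-y)]
    have h3 : Real.exp (-y) * w y ≤ Real.exp (-t) * (w' t + w t) := le_trans h2 h1
    have h4 := mul_le_mul_of_nonneg_left h3 (Real.exp_pos t).le
    calc Real.exp (t - y) * w y = Real.exp t * (Real.exp (-y) * w y) := by
          rw [← mul_assoc, ← Real.exp_add]; ring_nf
      _ ≤ Real.exp t * (Real.exp (-t) * (w' t + w t)) := h4
      _ = w' t + w t := by rw [← mul_assoc, ← Real.exp_add]; simp
  -- H t = exp t * w t - w y * (exp (2t - y) + exp y)/2 monotone on [y, X]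
  set c := w y with hc
  have hcnn : 0 ≤ c := hwnonneg y hy
  have hsub : Set.Icc y X ⊆ Set.Icc (0:ℝ) X := Set.Icc_subset_Icc hy.1 le_rfl
  have hH : MonotoneOn (fun t => Real.exp t * w t - c * (Real.exp (2*t - y) + Real.exp y)/2)
      (Set.Icc y X) := by
    apply mono_aux (f' := fun t => Real.exp t * (w t + w' t) - c * Real.exp (2*t - y))
    · intro t ht
      have he : HasDerivWithinAt (fun t => Real.exp t) (Real.exp t) (Set.Icc y X) t :=
        (Real.hasDerivAt_exp t).hasDerivWithinAt
      have h2 : HasDerivWithinAt (fun t => Real.exp (2*t - y)) (2 * Real.exp (2*t - y))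
          (Set.Icc y X) t := by
        have := ((Real.hasDerivAt_exp (2*t - y)).comp t
          (((hasDerivAt_id t).const_mul 2).sub_const y)).hasDerivWithinAt
          (s := Set.Icc y X)
        refine this.congr_deriv ?_
        ring
      have hw1 := (hw' t (hsub ht)).mono hsub
      have := (he.fun_mul hw1).sub (((h2.add_const (Real.exp y)).const_mul c).div_const 2)
      refine this.congr_deriv ?_
      ring
    · intro t ht
      have hk := key1 t (hsub ht) ht.1
      have h5 : c * Real.exp (2*t - y) ≤ Real.exp t * (w t + w' t) := by
        have := mul_le_mul_of_nonneg_left hk (Real.exp_pos t).le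
        calc c * Real.exp (2*t - y) = Real.exp t * (Real.exp (t - y) * c) := by
              rw [show (2*t - y) = t + (t - y) by ring, Real.exp_add]; ring
          _ ≤ Real.exp t * (w' t + w t) := this
          _ = Real.exp t * (w t + w' t) := by ring
      linarith
  have hyy : y ∈ Set.Icc y X := ⟨le_rfl, hx.2.trans' hyx |>.trans le_rfl⟩
  have hxy : x ∈ Set.Icc y X := ⟨hyx, hx.2⟩
  have hHle := hH hyy hxy hyx
  have hHy : Real.exp y * w y - c * (Real.exp (2*y - y) + Real.exp y)/2 = 0 := by
    rw [hc]; ring_nf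
  have hfin : c * (Real.exp (2*x - y) + Real.exp y)/2 ≤ Real.exp x * w x := by
    simp only [hHy] at hHle
    linarith [hHle]
  have hcosh : Real.exp x * (c * Real.cosh (x - y)) = c * (Real.exp (2*x - y) + Real.exp y)/2 := by
    rw [Real.cosh_eq]
    rw [show (2*x - y) = x + (x - y) by ring, show y = x + (-(x-y)) by ring]
    rw [Real.exp_add, Real.exp_add]
    ring_nf
  have := hfin
  rw [← hcosh] at this
  have hex := (Real.exp_pos x)
  nlinarith [this]


/-- If `w ≥ 0`, `w'' ≥ w` on `[0,X]`, `w'(0) ≥ 0`, and `p` is a nonnegative decreasing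
integrable weight, then `∫₀^X p·w ≤ (p(0)/cosh(X/2) + p(X/2)) ∫₀^X w`. -/
theorem convex_decreasing_weight
    (X : ℝ) (hX : 0 < X)
    (w w' w'' : ℝ → ℝ)
    (hw' : ∀ x ∈ Set.Icc (0:ℝ) X, HasDerivWithinAt w (w' x) (Set.Icc 0 X) x)
    (hw'' : ∀ x ∈ Set.Icc (0:ℝ) X, HasDerivWithinAt w' (w'' x) (Set.Icc 0 X) x)
    (hw''cont : ContinuousOn w'' (Set.Icc 0 X))
    (hwnonneg : ∀ x ∈ Set.Icc (0:ℝ) X, 0 ≤ w x)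
    (hconvex : ∀ x ∈ Set.Icc (0:ℝ) X, w x ≤ w'' x)
    (hw'0 : 0 ≤ w' 0)
    (p : ℝ → ℝ)
    (hpnonneg : ∀ x ∈ Set.Icc (0:ℝ) X, 0 ≤ p x)
    (hpanti : AntitoneOn p (Set.Icc 0 X))
    (hpint : IntervalIntegrable p MeasureTheory.volume 0 X) :
    (∫ x in (0:ℝ)..X, p x * w x)
      ≤ (p 0 / Real.cosh (X/2) + p (X/2)) * ∫ x in (0:ℝ)..X, w x := by
  have hX2 : (0:ℝ) ≤ X/2 := by linarith
  have hX2' : X/2 ≤ X := by linarith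
  have h0m : (0:ℝ) ∈ Set.Icc (0:ℝ) X := ⟨le_rfl, hX.le⟩
  have hXm : X ∈ Set.Icc (0:ℝ) X := ⟨hX.le, le_rfl⟩
  have hhm : X/2 ∈ Set.Icc (0:ℝ) X := ⟨hX2, hX2'⟩
  have hwcont : ContinuousOn w (Set.Icc 0 X) := fun t ht => (hw' t ht).continuousWithinAt
  have huIcc : Set.uIcc (0:ℝ) X = Set.Icc 0 X := Set.uIcc_of_le hX.le
  have hsub1 : Set.uIcc (0:ℝ) (X/2) ⊆ Set.Icc (0:ℝ) X := by
    rw [Set.uIcc_of_le hX2]; exact Set.Icc_subset_Icc le_rfl hX2'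
  have hsub2 : Set.uIcc (X/2) X ⊆ Set.Icc (0:ℝ) X := by
    rw [Set.uIcc_of_le hX2']; exact Set.Icc_subset_Icc hX2 le_rfl
  -- integrabilities
  have hwint1 : IntervalIntegrable w MeasureTheory.volume 0 (X/2) :=
    (hwcont.mono hsub1).intervalIntegrable
  have hwint2 : IntervalIntegrable w MeasureTheory.volume (X/2) X :=
    (hwcont.mono hsub2).intervalIntegrable
  have hpwint1 : IntervalIntegrable (fun x => p x * w x) MeasureTheory.volume 0 (X/2) :=
    (hpint.mono_set (by rw [huIcc]; exact hsub1)).mul_continuousOn (hwcont.mono hsub1)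
  have hpwint2 : IntervalIntegrable (fun x => p x * w x) MeasureTheory.volume (X/2) X :=
    (hpint.mono_set (by rw [huIcc]; exact hsub2)).mul_continuousOn (hwcont.mono hsub2)
  set I1 := ∫ x in (0:ℝ)..(X/2), w x with hI1
  set I2 := ∫ x in (X/2)..X, w x with hI2
  have hI1nn : 0 ≤ I1 := by
    apply intervalIntegral.integral_nonneg hX2
    intro u hu; exact hwnonneg u (hsub1 (by rwa [Set.uIcc_of_le hX2]))
  have hI2nn : 0 ≤ I2 := by
    apply intervalIntegral.integral_nonneg hX2'
    intro u hu; exact hwnonneg u (hsub2 (by rwa [Set.uIcc_of_le hX2']))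
  have hsplitw : I1 + I2 = ∫ x in (0:ℝ)..X, w x :=
    intervalIntegral.integral_add_adjacent_intervals hwint1 hwint2
  have hsplitpw : (∫ x in (0:ℝ)..X, p x * w x)
      = (∫ x in (0:ℝ)..(X/2), p x * w x) + ∫ x in (X/2)..X, p x * w x :=
    (intervalIntegral.integral_add_adjacent_intervals hpwint1 hpwint2).symm
  -- bound on [0, X/2]
  have hb1 : (∫ x in (0:ℝ)..(X/2), p x * w x) ≤ p 0 * I1 := by
    rw [hI1, ← intervalIntegral.integral_const_mul]
    apply intervalIntegral.integral_mono_on hX2 hpwint1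
      ((hwcont.mono hsub1).intervalIntegrable.const_mul _)
    intro u hu
    have hum : u ∈ Set.Icc (0:ℝ) X := Set.Icc_subset_Icc le_rfl hX2' hu
    exact mul_le_mul_of_nonneg_right (hpanti h0m hum hu.1) (hwnonneg u hum)
  -- bound on [X/2, X]
  have hb2 : (∫ x in (X/2)..X, p x * w x) ≤ p (X/2) * I2 := by
    rw [hI2, ← intervalIntegral.integral_const_mul]
    apply intervalIntegral.integral_mono_on hX2' hpwint2
      ((hwcont.mono hsub2).intervalIntegrable.const_mul _)
    intro u hu
    have hum : u ∈ Set.Icc (0:ℝ) X := Set.Icc_subset_Icc hX2 le_rfl hu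
    exact mul_le_mul_of_nonneg_right (hpanti hhm hum hu.1) (hwnonneg u hum)
  -- key estimate: cosh(X/2) * I1 ≤ I2
  have hkey : Real.cosh (X/2) * I1 ≤ I2 := by
    have hshift : (∫ y in (0:ℝ)..(X/2), w (y + X/2)) = I2 := by
      rw [hI2]
      have := intervalIntegral.integral_comp_add_right (a := (0:ℝ)) (b := X/2) w (X/2)
      rw [this]; norm_num
    rw [← hshift]
    have : Real.cosh (X/2) * I1 = ∫ y in (0:ℝ)..(X/2), Real.cosh (X/2) * w y := by
      rw [hI1, intervalIntegral.integral_const_mul]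
    rw [this]
    apply intervalIntegral.integral_mono_on hX2 (hwint1.const_mul _)
    · apply ContinuousOn.intervalIntegrable
      apply hwcont.comp (continuous_add_right (X/2)).continuousOn
      intro v hv
      rw [Set.uIcc_of_le hX2] at hv
      exact ⟨by linarith [hv.1], by linarith [hv.2]⟩
    · intro u hu
      have hum : u ∈ Set.Icc (0:ℝ) X := Set.Icc_subset_Icc le_rfl hX2' hu
      have hum2 : u + X/2 ∈ Set.Icc (0:ℝ) X := ⟨by linarith [hu.1], by linarith [hu.2]⟩
      have := cosh_compare X w w' w'' hw' hw'' hwnonneg hconvex hw'0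
        u hum (u + X/2) hum2 (by linarith)
      rw [show u + X/2 - u = X/2 by ring] at this
      linarith [this]
  -- finish
  have hcoshpos : 0 < Real.cosh (X/2) := Real.cosh_pos _
  have hp0 : 0 ≤ p 0 := hpnonneg 0 h0m
  have hph : 0 ≤ p (X/2) := hpnonneg (X/2) hhm
  rw [hsplitpw, ← hsplitw]
  have h1 : p 0 * I1 ≤ p 0 / Real.cosh (X/2) * (I1 + I2) := by
    rw [div_mul_eq_mul_div, le_div_iff₀ hcoshpos]
    nlinarith
  have h2 : p (X/2) * I2 ≤ p (X/2) * (I1 + I2) := by nlinarith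
  nlinarith [hb1, hb2, h1, h2]
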